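/- arXiv:2007.13244 — 3 statements merged into one kernel-verified Lean document; each statement's English description precedes it below -/
import Mathlib

section
/- Let G be a group and x, u, v ∈ G. Let a ∈ ℤ, and suppose xᵃ commutes with u, and xᵃ⁻¹ commutes with v. If x commutes with uv, then x commutes with v (and hence also with u). -/
/-- If `xᵃ` commutes with `u`, `xᵃ⁻¹` commutes with `v`, and `x` commutes with `u*v`,
then `x` commutes with `v` and with `u`. -/
theorem commute_of_commute_mul {G : Type*} [Group G] (x u v : G) (a : ℤ)
    (hu : Commute (x ^ a) u) (hv : Commute (x ^ (a - 1)) v)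
    (h : Commute x (u * v)) : Commute x v ∧ Commute x u := by
  have key : u⁻¹ * x * u = v * x * v⁻¹ := by
    have h1 : x * u * v = u * v * x := by simpa [mul_assoc] using h.eq
    have h2 : x * u = u * v * x * v⁻¹ := by rw [← h1]; group
    rw [mul_assoc, h2]; group
  have ha : (v * x * v⁻¹) ^ a = x ^ a := by
    rw [← key, show u⁻¹ * x * u = u⁻¹ * x * (u⁻¹)⁻¹ by rw [inv_inv], conj_zpow,
      inv_inv, mul_assoc, hu.eq]
    group
  have ha1 : (v * x * v⁻¹) ^ (a - 1) = x ^ (a - 1) := by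
    rw [conj_zpow, ← hv.eq]
    group
  have hx : v * x * v⁻¹ = x := by
    have : (v * x * v⁻¹) ^ a * ((v * x * v⁻¹) ^ (a - 1))⁻¹ = x ^ a * (x ^ (a - 1))⁻¹ := by
      rw [ha, ha1]
    rwa [← zpow_neg, ← zpow_neg, ← zpow_add, ← zpow_add,
      show a + -(a - 1) = 1 by ring, zpow_one, zpow_one] at this
  have hxv : Commute x v := by
    have : x * v = v * x := by
      conv_lhs => rw [← hx]
      group
    exact this
  exact ⟨hxv, by simpa [mul_assoc] using h.mul_right hxv.inv_right⟩
end

section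
/- Let G be a group and x, w, u ∈ G, and set v = u·w. Let a ∈ ℤ. Suppose xᵃ commutes with w and xᵃ⁻¹ commutes with u. If x commutes with the conjugate x^v = v⁻¹xv, then x commutes with x^u = u⁻¹xu. -/
/-- If `v = u*w`, `xᵃ` commutes with `w`, `xᵃ⁻¹` commutes with `u`, and `x` commutes with
the conjugate `x^v = v⁻¹xv`, then `x` commutes with `x^u = u⁻¹xu`. -/
theorem commute_conj_of_commute_conj {G : Type*} [Group G] (x w u : G) (a : ℤ)
    (hw : Commute (x ^ a) w) (hu : Commute (x ^ (a - 1)) u)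
    (h : Commute x ((u * w)⁻¹ * x * (u * w))) :
    Commute x (u⁻¹ * x * u) := by
  set c := u⁻¹ * x * u with hc
  -- x^(a-1) commutes with c
  have h1 : Commute (x ^ (a - 1)) c :=
    (hu.inv_right.mul_right ((Commute.refl x).zpow_left (a - 1))).mul_right hu
  -- rewrite h
  have h' : Commute x (w⁻¹ * c * w) := by
    have : (u * w)⁻¹ * x * (u * w) = w⁻¹ * c * w := by
      simp [hc, mul_assoc]
    rwa [this] at h
  -- x^a commutes with c
  have h2 : Commute (x ^ a) c := by
    have ha : Commute (x ^ a) (w⁻¹ * c * w) := (h'.zpow_left a)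
    have : c = w * (w⁻¹ * c * w) * w⁻¹ := by group
    rw [this]
    exact (hw.mul_right ha).mul_right hw.inv_right
  -- combine: x = x^a * (x^(a-1))⁻¹
  have hx : x = x ^ a * (x ^ (a - 1))⁻¹ := by
    rw [← zpow_neg, ← zpow_add]; norm_num
  rw [show Commute x c ↔ Commute (x ^ a * (x ^ (a - 1))⁻¹) c from by rw [← hx]]
  exact h2.mul_left h1.inv_left
end

section
/- Let G be a group, x ∈ G, and w₁, …, wₙ ∈ [G,G] elements of the commutator subgroup. If the quotient of G by the normal closure of the set {[x, [x, wᵢ]] : 1 ≤ i ≤ n} is abelian, then the quotient of G by the normal closure of {[x, wᵢ] : 1 ≤ i ≤ n} is also abelian. -/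
/-- If the quotient by the normal closure of the relators `[x,[x,wᵢ]]` (with each
`wᵢ ∈ [G,G]`) is abelian, then so is the quotient by the normal closure of the `[x,wᵢ]`,
where `[a,b] = a⁻¹b⁻¹ab`. -/
theorem stabilization_of_finger_relations {G : Type*} [Group G] (x : G)
    (n : ℕ) (w : Fin n → G) (hw : ∀ i, w i ∈ commutator G)
    (hab : ∀ a b : G ⧸ Subgroup.normalClosure
        (Set.range fun i =>
          x⁻¹ * (x⁻¹ * (w i)⁻¹ * x * (w i))⁻¹ * x * (x⁻¹ * (w i)⁻¹ * x * (w i))),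
      a * b = b * a) :
    ∀ a b : G ⧸ Subgroup.normalClosure
        (Set.range fun i => x⁻¹ * (w i)⁻¹ * x * (w i)),
      a * b = b * a := by
  set S₁ : Set G := Set.range fun i =>
      x⁻¹ * (x⁻¹ * (w i)⁻¹ * x * (w i))⁻¹ * x * (x⁻¹ * (w i)⁻¹ * x * (w i)) with hS₁
  set S₂ : Set G := Set.range fun i => x⁻¹ * (w i)⁻¹ * x * (w i) with hS₂
  set N₁ := Subgroup.normalClosure S₁
  set N₂ := Subgroup.normalClosure S₂
  -- N₁ ≤ N₂
  have hN12 : N₁ ≤ N₂ := by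
    apply Subgroup.normalClosure_le_normal
    rintro _ ⟨i, rfl⟩
    have hc : x⁻¹ * (w i)⁻¹ * x * (w i) ∈ N₂ :=
      Subgroup.subset_normalClosure ⟨i, rfl⟩
    have hconj : x⁻¹ * (x⁻¹ * (w i)⁻¹ * x * (w i))⁻¹ * x ∈ N₂ := by
      have := (Subgroup.normalClosure_normal (s := S₂)).conj_mem _ (inv_mem hc) x⁻¹
      simpa [mul_assoc] using this
    have := mul_mem hconj hc
    simpa [mul_assoc] using this
  -- commutator G ≤ N₁
  have hcomm : commutator G ≤ N₁ := by
    rw [commutator_eq_closure]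
    apply Subgroup.closure_le N₁ |>.mpr
    rintro _ ⟨g, h, rfl⟩
    have h1 := hab (QuotientGroup.mk g) (QuotientGroup.mk h)
    rw [← QuotientGroup.mk_mul, ← QuotientGroup.mk_mul, QuotientGroup.eq] at h1
    open scoped commutatorElement in
    have : ⁅g, h⁆ = (h * g) * ((h * g)⁻¹ * (g * h)) * (h * g)⁻¹ := by
      group
    rw [this]
    exact (Subgroup.normalClosure_normal).conj_mem _ (by simpa using inv_mem h1) (h * g)
  have hcomm2 : commutator G ≤ N₂ := hcomm.trans hN12
  intro a b
  induction a using QuotientGroup.induction_on with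
  | H g =>
  induction b using QuotientGroup.induction_on with
  | H h =>
  rw [← QuotientGroup.mk_mul, ← QuotientGroup.mk_mul, QuotientGroup.eq]
  open scoped commutatorElement in
  have : (g * h)⁻¹ * (h * g) = ⁅h⁻¹, g⁻¹⁆ := by group
  rw [this]
  exact hcomm2 (Subgroup.commutator_mem_commutator (Subgroup.mem_top _) (Subgroup.mem_top _))
end
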